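/- Let n ≥ 1, let B be a finite list of bids on n goods, and let P ⊆ ℝ^n be a nonempty open convex set. Then the restriction of the indirect utility function f_B to P is convex if and only if there is no price vector q ∈ P and pair of distinct goods i, i' ∈ {0,1,…,n} at which the weights of the bids of B that are marginal on both i and i' at q sum to a negative number. -/

import Mathlib

open Finset

noncomputable section

variable {n : ℕ}

/-- Extend a value/price vector in `ℝ^n` by a 0-th coordinate (the reject good) equal to 0. -/
def extVec (b : Fin n → ℝ) : Fin (n + 1) → ℝ := Fin.cons 0 b

/-- Surplus of good `i` (in `{0,…,n}`) for value vector `b` at price `p`. -/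
def surplus (b p : Fin n → ℝ) (i : Fin (n + 1)) : ℝ := extVec b i - extVec p i

/-- Maximal surplus over all goods (including the reject good). -/
def maxSurplus (b p : Fin n → ℝ) : ℝ :=
  Finset.univ.sup' Finset.univ_nonempty (surplus b p)

/-- The bid with value vector `b` demands good `i` at price `p`. -/
def Demands (b p : Fin n → ℝ) (i : Fin (n + 1)) : Prop :=
  ∀ j, surplus b p j ≤ surplus b p i

open Classical in
/-- The set of goods demanded by value vector `b` at price `p`. -/
def demandedSet (b p : Fin n → ℝ) : Finset (Fin (n + 1)) :=
  Finset.univ.filter fun i => Demands b p i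

/-- Indirect utility function of a bid list (bids are pairs of value vector and weight). -/
def indirectUtility (B : List ((Fin n → ℝ) × ℝ)) (p : Fin n → ℝ) : ℝ :=
  (B.map fun bw => bw.2 * maxSurplus bw.1 p).sum

/-- Surplus gap of the bid `b` at `p`: maximal surplus minus the best surplus on
a non-demanded good (junk value when every good is demanded). -/
def surplusGap (b p : Fin n → ℝ) : ℝ :=
  maxSurplus b p - sSup (surplus b p '' {i | i ∉ demandedSet b p})

/-- `B` is `ε`-valid at `p` if its indirect utility function is convex on the open
`L∞`-ball of radius `ε` around `p`. -/
def epsValid (B : List ((Fin n → ℝ) × ℝ)) (p : Fin n → ℝ) (ε : ℝ) : Prop :=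
  ConvexOn ℝ {q : Fin n → ℝ | ‖q - p‖ < ε} (indirectUtility B)

open Classical in
/-- Sum of the weights of bids in `B` that are marginal on both `i` and `i'` at `p`. -/
def marginalWeight (B : List ((Fin n → ℝ) × ℝ)) (p : Fin n → ℝ) (i i' : Fin (n + 1)) : ℝ :=
  (B.map fun bw => if Demands bw.1 p i ∧ Demands bw.1 p i' then bw.2 else 0).sum


-- chunk 1 : basics
lemma extVec_zero (b : Fin n → ℝ) : extVec b 0 = 0 := rfl

lemma extVec_succ (b : Fin n → ℝ) (j : Fin n) : extVec b j.succ = b j := by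
  simp [extVec]

lemma extVec_add (u v : Fin n → ℝ) (i : Fin (n+1)) :
    extVec (u + v) i = extVec u i + extVec v i := by
  induction i using Fin.cases with
  | zero => simp [extVec]
  | succ j => simp [extVec]

lemma extVec_smul (s : ℝ) (v : Fin n → ℝ) (i : Fin (n+1)) :
    extVec (s • v) i = s * extVec v i := by
  induction i using Fin.cases with
  | zero => simp [extVec]
  | succ j => simp [extVec]

lemma extVec_neg (v : Fin n → ℝ) (i : Fin (n+1)) :
    extVec (-v) i = - extVec v i := by
  induction i using Fin.cases with
  | zero => simp [extVec]
  | succ j => simp [extVec]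

lemma surplus_add_smul (b p v : Fin n → ℝ) (s : ℝ) (i : Fin (n+1)) :
    surplus b (p + s • v) i = surplus b p i - s * extVec v i := by
  simp [surplus, extVec_add, extVec_smul]; ring

lemma mem_demandedSet {b p : Fin n → ℝ} {i : Fin (n+1)} :
    i ∈ demandedSet b p ↔ Demands b p i := by
  classical
  simp [demandedSet]

lemma demandedSet_nonempty (b p : Fin n → ℝ) : (demandedSet b p).Nonempty := by
  classical
  obtain ⟨i, -, hi⟩ := Finset.exists_max_image Finset.univ (surplus b p) Finset.univ_nonempty
  exact ⟨i, mem_demandedSet.2 fun j => hi j (Finset.mem_univ j)⟩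

lemma surplus_le_maxSurplus (b p : Fin n → ℝ) (i : Fin (n+1)) :
    surplus b p i ≤ maxSurplus b p :=
  Finset.le_sup' _ (Finset.mem_univ i)

lemma maxSurplus_eq (b p : Fin n → ℝ) {i : Fin (n+1)} (hi : i ∈ demandedSet b p) :
    maxSurplus b p = surplus b p i := by
  refine le_antisymm (Finset.sup'_le _ _ fun j _ => (mem_demandedSet.1 hi) j)
    (surplus_le_maxSurplus b p i)

lemma lt_maxSurplus_of_not_mem {b p : Fin n → ℝ} {i : Fin (n+1)}
    (hi : i ∉ demandedSet b p) : surplus b p i < maxSurplus b p := by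
  rcases lt_or_eq_of_le (surplus_le_maxSurplus b p i) with h | h
  · exact h
  · exfalso
    apply hi
    refine mem_demandedSet.2 fun j => ?_
    rw [h]; exact surplus_le_maxSurplus b p j

-- sup' helpers
lemma sup'_add_const {α : Type*} (s : Finset α) (hs : s.Nonempty) (c : ℝ) (f : α → ℝ) :
    s.sup' hs (fun i => c + f i) = c + s.sup' hs f := by
  apply le_antisymm
  · exact Finset.sup'_le _ _ fun i hi => by
      have := Finset.le_sup' f hi; linarith
  · obtain ⟨i, hi, hie⟩ := Finset.exists_mem_eq_sup' hs f
    rw [hie]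
    exact Finset.le_sup'_of_le _ hi le_rfl

lemma sup'_const_mul {α : Type*} (s : Finset α) (hs : s.Nonempty) {c : ℝ} (hc : 0 ≤ c)
    (f : α → ℝ) : s.sup' hs (fun i => c * f i) = c * s.sup' hs f := by
  apply le_antisymm
  · exact Finset.sup'_le _ _ fun i hi =>
      mul_le_mul_of_nonneg_left (Finset.le_sup' f hi) hc
  · obtain ⟨i, hi, hie⟩ := Finset.exists_mem_eq_sup' hs f
    rw [hie]
    exact Finset.le_sup' (fun i => c * f i) hi

lemma continuous_maxSurplus (b : Fin n → ℝ) : Continuous (fun p => maxSurplus b p) := by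
  have : ∀ i : Fin (n+1), Continuous (fun p : Fin n → ℝ => surplus b p i) := by
    intro i
    induction i using Fin.cases with
    | zero => simp only [surplus, extVec_zero]; simpa using continuous_const
    | succ j =>
      simp only [surplus, extVec_succ]
      exact continuous_const.sub (continuous_apply j)
  rw [continuous_iff_continuousAt]
  intro p
  exact Filter.Tendsto.finset_sup'_nhds_apply Finset.univ_nonempty
    (fun i _ => ((this i).tendsto p))

lemma continuous_indirectUtility (B : List ((Fin n → ℝ) × ℝ)) :
    Continuous (indirectUtility B) := by
  induction B with
  | nil =>
    have : indirectUtility (n := n) [] = fun _ => (0:ℝ) := by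
      funext p; simp [indirectUtility]
    rw [this]; exact continuous_const
  | cons bw B ih =>
    have : indirectUtility (bw :: B) =
        fun p => bw.2 * maxSurplus bw.1 p + indirectUtility B p := by
      funext p; simp [indirectUtility]
    rw [this]
    exact (continuous_const.mul (continuous_maxSurplus bw.1)).add ih

-- list helpers
lemma list_sum_map_add {α : Type*} (l : List α) (f g : α → ℝ) :
    (l.map (fun x => f x + g x)).sum = (l.map f).sum + (l.map g).sum := by
  induction l with
  | nil => simp
  | cons a l ih => simp [ih]; ring

lemma list_sum_map_mul_left {α : Type*} (l : List α) (c : ℝ) (f : α → ℝ) :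
    (l.map (fun x => c * f x)).sum = c * (l.map f).sum := by
  induction l with
  | nil => simp
  | cons a l ih => simp [ih]; ring

lemma list_sum_map_finsetSum {α β : Type*} (l : List α) (s : Finset β) (f : α → β → ℝ) :
    (l.map (fun x => ∑ i ∈ s, f x i)).sum = ∑ i ∈ s, (l.map (fun x => f x i)).sum := by
  induction l with
  | nil => simp
  | cons a l ih => simp [ih, Finset.sum_add_distrib]

lemma list_exists_delta {α : Type*} (l : List α) (Q : α → ℝ → Prop)
    (h : ∀ b ∈ l, ∃ δ > 0, ∀ s, 0 < s → s < δ → Q b s) :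
    ∃ δ > 0, ∀ s, 0 < s → s < δ → ∀ b ∈ l, Q b s := by
  induction l with
  | nil => exact ⟨1, one_pos, by simp⟩
  | cons a l ih =>
    obtain ⟨δ₁, hδ₁, h₁⟩ := h a List.mem_cons_self
    obtain ⟨δ₂, hδ₂, h₂⟩ := ih (fun b hb => h b (List.mem_cons_of_mem a hb))
    refine ⟨min δ₁ δ₂, lt_min hδ₁ hδ₂, fun s hs hsδ b hb => ?_⟩
    rcases List.mem_cons.1 hb with rfl | hb
    · exact h₁ s hs (hsδ.trans_le (min_le_left _ _))
    · exact h₂ s hs (hsδ.trans_le (min_le_right _ _)) b hb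


lemma mem_demandedSet_iff_surplus {b p : Fin n → ℝ} {i : Fin (n+1)} :
    i ∈ demandedSet b p ↔ surplus b p i = maxSurplus b p := by
  constructor
  · intro h; exact (maxSurplus_eq b p h).symm
  · intro h
    refine mem_demandedSet.2 fun j => ?_
    rw [h]; exact surplus_le_maxSurplus b p j

def negvsup (b p v : Fin n → ℝ) : ℝ :=
  (demandedSet b p).sup' (demandedSet_nonempty b p) (fun κ => -extVec v κ)

lemma bid_step (b p v : Fin n → ℝ) :
    ∃ δ > 0, (∀ s : ℝ, 0 ≤ s → s < δ →
        maxSurplus b (p + s • v) = maxSurplus b p + s * negvsup b p v) ∧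
      ∀ s : ℝ, 0 < s → s < δ →
        demandedSet b (p + s • v) =
          (demandedSet b p).filter (fun κ => -extVec v κ = negvsup b p v) := by
  classical
  have hD : (demandedSet b p).Nonempty := demandedSet_nonempty b p
  set D := demandedSet b p with hDdef
  set V := Finset.univ.sup' Finset.univ_nonempty (fun κ : Fin (n+1) => |extVec v κ|) with hVdef
  have hVb : ∀ κ, |extVec v κ| ≤ V := fun κ =>
    Finset.le_sup' (fun κ : Fin (n+1) => |extVec v κ|) (Finset.mem_univ κ)
  have hV0 : 0 ≤ V := le_trans (abs_nonneg _) (hVb 0)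
  obtain ⟨γ, hγ, hgap⟩ : ∃ γ > 0, ∀ κ, κ ∉ D → surplus b p κ ≤ maxSurplus b p - γ := by
    by_cases hC : (Finset.univ \ D).Nonempty
    · refine ⟨(Finset.univ \ D).inf' hC (fun κ => maxSurplus b p - surplus b p κ), ?_, ?_⟩
      · rw [gt_iff_lt, Finset.lt_inf'_iff]
        intro κ hκ
        have := lt_maxSurplus_of_not_mem (Finset.mem_sdiff.1 hκ).2
        linarith
      · intro κ hκ
        have h1 := Finset.inf'_le (fun κ => maxSurplus b p - surplus b p κ)
          (Finset.mem_sdiff.2 ⟨Finset.mem_univ κ, hκ⟩)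
        linarith [h1]
    · exact ⟨1, one_pos, fun κ hκ =>
        absurd ⟨κ, Finset.mem_sdiff.2 ⟨Finset.mem_univ κ, hκ⟩⟩ hC⟩
  have hns : ∀ κ ∈ D, -extVec v κ ≤ negvsup b p v := fun κ hκ =>
    Finset.le_sup' (fun κ => -extVec v κ) hκ
  have hnegV : -V ≤ negvsup b p v := by
    obtain ⟨i0, hi0⟩ := hD
    refine le_trans ?_ (hns i0 hi0)
    have h1 := hVb i0
    have h2 := le_abs_self (extVec v i0)
    linarith
  set δ := γ / (2*V+1) with hδdef
  have hδpos : 0 < δ := by positivity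
  have hup : ∀ s : ℝ, 0 ≤ s → s < δ → ∀ κ, κ ∉ D →
      surplus b (p + s • v) κ < maxSurplus b p + s * negvsup b p v := by
    intro s hs hsδ κ hκ
    rw [surplus_add_smul]
    have h1 := hgap κ hκ
    have h2 : s * (2*V+1) < γ := by
      rw [hδdef, lt_div_iff₀ (by positivity)] at hsδ
      exact hsδ
    have h3 : -(s * extVec v κ) ≤ s * V := by
      nlinarith [hVb κ, neg_abs_le (extVec v κ), le_abs_self (extVec v κ)]
    have h5 : -(s*V) ≤ s * negvsup b p v := by nlinarith
    nlinarith
  have hmax : ∀ s : ℝ, 0 ≤ s → s < δ →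
      maxSurplus b (p + s • v) = maxSurplus b p + s * negvsup b p v := by
    intro s hs hsδ
    apply le_antisymm
    · apply Finset.sup'_le
      intro κ _
      by_cases hκ : κ ∈ D
      · rw [surplus_add_smul]
        have h1 : surplus b p κ = maxSurplus b p := mem_demandedSet_iff_surplus.1 hκ
        have h2 : s * (-extVec v κ) ≤ s * negvsup b p v :=
          mul_le_mul_of_nonneg_left (hns κ hκ) hs
        nlinarith
      · exact le_of_lt (hup s hs hsδ κ hκ)
    · obtain ⟨κ0, hκ0, heq⟩ := Finset.exists_mem_eq_sup' hD (fun κ => -extVec v κ)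
      have h1 : surplus b p κ0 = maxSurplus b p := mem_demandedSet_iff_surplus.1 hκ0
      have heq' : negvsup b p v = -extVec v κ0 := heq
      have h2 : maxSurplus b p + s * negvsup b p v = surplus b (p + s • v) κ0 := by
        rw [surplus_add_smul, heq', ← h1]; ring
      rw [h2]
      exact surplus_le_maxSurplus _ _ _
  refine ⟨δ, hδpos, hmax, ?_⟩
  intro s hs hsδ
  ext κ
  rw [Finset.mem_filter, mem_demandedSet_iff_surplus, hmax s hs.le hsδ, surplus_add_smul]
  constructor
  · intro h
    by_cases hκ : κ ∈ D
    · refine ⟨hκ, ?_⟩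
      have h1 : surplus b p κ = maxSurplus b p := mem_demandedSet_iff_surplus.1 hκ
      have h2 : s * (-extVec v κ) = s * negvsup b p v := by rw [h1] at h; linarith
      exact mul_left_cancel₀ (ne_of_gt hs) h2
    · refine absurd h (ne_of_lt ?_)
      have := hup s hs.le hsδ κ hκ
      rw [surplus_add_smul] at this
      exact this
  · rintro ⟨hκ, he⟩
    have h1 : surplus b p κ = maxSurplus b p := mem_demandedSet_iff_surplus.1 hκ
    rw [h1, ← he]; ring

def slopeIU (B : List ((Fin n → ℝ) × ℝ)) (p v : Fin n → ℝ) : ℝ :=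
  (B.map fun bw => bw.2 * negvsup bw.1 p v).sum

lemma f_step (B : List ((Fin n → ℝ) × ℝ)) (p v : Fin n → ℝ) :
    ∃ δ > 0, ∀ s : ℝ, 0 ≤ s → s < δ →
      indirectUtility B (p + s • v) = indirectUtility B p + s * slopeIU B p v := by
  obtain ⟨δ, hδ, hall⟩ := list_exists_delta B
    (fun bw s => maxSurplus bw.1 (p + s • v) = maxSurplus bw.1 p + s * negvsup bw.1 p v)
    (fun bw _ => by
      obtain ⟨δ, hδ, h1, _⟩ := bid_step bw.1 p v
      exact ⟨δ, hδ, fun s hs hsδ => h1 s hs.le hsδ⟩)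
  refine ⟨δ, hδ, fun s hs hsδ => ?_⟩
  rcases eq_or_lt_of_le hs with heq | hs'
  · rw [← heq]; simp
  · have hcg : ∀ bw ∈ B, bw.2 * maxSurplus bw.1 (p + s • v) =
        bw.2 * maxSurplus bw.1 p + s * (bw.2 * negvsup bw.1 p v) := by
      intro bw hbw
      rw [hall s hs' hsδ bw hbw]; ring
    show (B.map fun bw => bw.2 * maxSurplus bw.1 (p + s • v)).sum = _
    rw [List.map_congr_left hcg, list_sum_map_add, list_sum_map_mul_left]
    rfl

lemma demanded_step_all (B : List ((Fin n → ℝ) × ℝ)) (p v : Fin n → ℝ) :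
    ∃ δ > 0, ∀ s : ℝ, 0 < s → s < δ → ∀ bw ∈ B,
      demandedSet bw.1 (p + s • v) =
        (demandedSet bw.1 p).filter (fun κ => -extVec v κ = negvsup bw.1 p v) := by
  obtain ⟨δ, hδ, hall⟩ := list_exists_delta B
    (fun bw s => demandedSet bw.1 (p + s • v) =
      (demandedSet bw.1 p).filter (fun κ => -extVec v κ = negvsup bw.1 p v))
    (fun bw _ => by
      obtain ⟨δ, hδ, _, h2⟩ := bid_step bw.1 p v
      exact ⟨δ, hδ, h2⟩)
  exact ⟨δ, hδ, hall⟩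


lemma extVec_sub (u v : Fin n → ℝ) (i : Fin (n+1)) :
    extVec (u - v) i = extVec u i - extVec v i := by
  induction i using Fin.cases with
  | zero => simp [extVec]
  | succ j => simp [extVec]

def dotp (c u : Fin n → ℝ) : ℝ := ∑ j, c j * u j

lemma dotp_add (c u w : Fin n → ℝ) : dotp c (u + w) = dotp c u + dotp c w := by
  simp [dotp, mul_add, Finset.sum_add_distrib]

lemma dotp_smul (c : Fin n → ℝ) (t : ℝ) (u : Fin n → ℝ) :
    dotp c (t • u) = t * dotp c u := by
  simp [dotp, Finset.mul_sum]; congr 1; funext j; ring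

lemma dotp_left_sub (c c' u : Fin n → ℝ) : dotp (c - c') u = dotp c u - dotp c' u := by
  simp [dotp, sub_mul, Finset.sum_sub_distrib]

lemma dotp_left_smul (t : ℝ) (c u : Fin n → ℝ) : dotp (t • c) u = t * dotp c u := by
  simp [dotp, Finset.mul_sum]; congr 1; funext j; ring

def coefVec (κ : Fin (n+1)) : Fin n → ℝ := fun j => if j.succ = κ then 1 else 0

lemma dotp_coefVec (κ : Fin (n+1)) (u : Fin n → ℝ) : dotp (coefVec κ) u = extVec u κ := by
  induction κ using Fin.cases with
  | zero =>
    rw [extVec_zero]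
    refine Finset.sum_eq_zero fun j _ => ?_
    simp [coefVec, Fin.succ_ne_zero]
  | succ j0 =>
    rw [extVec_succ]
    rw [show dotp (coefVec j0.succ) u = ∑ j, (if j.succ = j0.succ then (1:ℝ) else 0) * u j from rfl]
    rw [Finset.sum_eq_single j0]
    · simp
    · intro j _ hj
      simp [Fin.succ_inj, hj]
    · intro h; exact absurd (Finset.mem_univ j0) h

lemma extVec_coefVec (κ κ' : Fin (n+1)) :
    extVec (coefVec κ) κ' = if κ' = κ ∧ κ' ≠ 0 then 1 else 0 := by
  induction κ' using Fin.cases with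
  | zero => rw [extVec_zero]; simp
  | succ j => rw [extVec_succ]; simp [coefVec, Fin.succ_ne_zero]

lemma exists_param_avoid {ι : Type*} (s : Finset ι) (h g : ι → ℝ)
    (hgh : ∀ m ∈ s, g m ≠ 0 ∨ h m ≠ 0) {ε : ℝ} (hε : 0 < ε) :
    ∃ t : ℝ, 0 < t ∧ t < ε ∧ ∀ m ∈ s, h m + t * g m ≠ 0 := by
  classical
  obtain ⟨t, htIoo, htm⟩ := (Set.Ioo_infinite hε).exists_notMem_finset
    (s.image fun m => -h m / g m)
  refine ⟨t, htIoo.1, htIoo.2, fun m hm => ?_⟩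
  rcases hgh m hm with hg | hh
  · intro habs
    apply htm
    refine Finset.mem_image.2 ⟨m, hm, ?_⟩
    field_simp
    linarith
  · by_cases hg : g m = 0
    · simpa [hg] using hh
    · intro habs
      apply htm
      refine Finset.mem_image.2 ⟨m, hm, ?_⟩
      field_simp
      linarith

lemma exists_common_dir {ι : Type*} (s : Finset ι) (c : ι → (Fin n → ℝ))
    (hc : ∀ m ∈ s, ∃ u, dotp (c m) u ≠ 0) :
    ∃ d, ∀ m ∈ s, dotp (c m) d ≠ 0 := by
  classical
  induction s using Finset.cons_induction with
  | empty => exact ⟨0, by simp⟩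
  | cons a s ha ih =>
    obtain ⟨d, hd⟩ := ih (fun m hm => hc m (Finset.mem_cons_of_mem hm))
    obtain ⟨e, he⟩ := hc a (Finset.mem_cons_self a s)
    obtain ⟨t, ht0, htε, hall⟩ := exists_param_avoid (Finset.cons a s ha)
      (fun m => dotp (c m) d) (fun m => dotp (c m) e)
      (fun m hm => by
        rcases Finset.mem_cons.1 hm with rfl | hm'
        · exact Or.inl he
        · exact Or.inr (hd m hm')) one_pos
    refine ⟨d + t • e, fun m hm => ?_⟩
    rw [dotp_add, dotp_smul]
    exact hall m hm

lemma pair_witness {i j : Fin (n+1)} (hij : i ≠ j) :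
    ∃ u, dotp (coefVec i - coefVec j) u ≠ 0 := by
  have key : ∀ u : Fin n → ℝ, dotp (coefVec i - coefVec j) u = extVec u i - extVec u j :=
    fun u => by rw [dotp_left_sub, dotp_coefVec, dotp_coefVec]
  by_cases hi : i = 0
  · refine ⟨-coefVec j, ?_⟩
    rw [key]
    have hj : j ≠ 0 := fun h => hij (by rw [hi, h])
    have e1 : extVec (-coefVec j) i = 0 := by
      have : extVec (-coefVec j) i = -extVec (coefVec j) i := extVec_neg _ _
      rw [this, extVec_coefVec]
      simp [hi]
    have e2 : extVec (-coefVec j) j = -1 := by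
      have : extVec (-coefVec j) j = -extVec (coefVec j) j := extVec_neg _ _
      rw [this, extVec_coefVec]
      simp [hj]
    rw [e1, e2]; norm_num
  · refine ⟨coefVec i, ?_⟩
    rw [key]
    have e1 : extVec (coefVec i) i = 1 := by rw [extVec_coefVec]; simp [hi]
    have e2 : extVec (coefVec i) j = 0 := by
      rw [extVec_coefVec, if_neg (fun h : j = i ∧ j ≠ 0 => hij h.1.symm)]
    rw [e1, e2]; norm_num

lemma triple_witness {i j k : Fin (n+1)} (hij : i ≠ j) (hjk : j ≠ k) (hik : i ≠ k)
    {a1 a2 : ℝ} (ha2 : a2 ≠ 0) :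
    ∃ u, dotp (a2 • (coefVec i - coefVec j) - a1 • (coefVec j - coefVec k)) u ≠ 0 := by
  have key : ∀ u : Fin n → ℝ,
      dotp (a2 • (coefVec i - coefVec j) - a1 • (coefVec j - coefVec k)) u =
        a2 * (extVec u i - extVec u j) - a1 * (extVec u j - extVec u k) := fun u => by
    rw [dotp_left_sub, dotp_left_smul, dotp_left_smul, dotp_left_sub, dotp_left_sub,
      dotp_coefVec, dotp_coefVec, dotp_coefVec]
  by_cases hi : i = 0
  · refine ⟨-(coefVec j + coefVec k), ?_⟩
    rw [key]
    have hj : j ≠ 0 := fun h => hij (by rw [hi, h])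
    have hk : k ≠ 0 := fun h => hik (by rw [hi, h])
    have eadd : ∀ κ, extVec (-(coefVec j + coefVec k)) κ =
        -(extVec (coefVec j) κ + extVec (coefVec k) κ) := fun κ => by
      rw [extVec_neg, extVec_add]
    rw [eadd, eadd, eadd]
    rw [extVec_coefVec, extVec_coefVec, extVec_coefVec, extVec_coefVec,
      extVec_coefVec, extVec_coefVec]
    have h1 : ¬(i = j ∧ i ≠ 0) := fun h => hij h.1
    have h2 : ¬(i = k ∧ i ≠ 0) := fun h => hik h.1
    have h3 : ¬(j = k ∧ j ≠ 0) := fun h => hjk h.1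
    have h4 : ¬(k = j ∧ k ≠ 0) := fun h => hjk h.1.symm
    rw [if_neg h1, if_neg h2, if_pos (show j = j ∧ j ≠ 0 from ⟨rfl, hj⟩), if_neg h3,
      if_neg h4, if_pos (show k = k ∧ k ≠ 0 from ⟨rfl, hk⟩)]
    simpa using ha2
  · refine ⟨coefVec i, ?_⟩
    rw [key]
    rw [extVec_coefVec, extVec_coefVec, extVec_coefVec]
    have h1 : ¬(j = i ∧ j ≠ 0) := fun h => hij h.1.symm
    have h2 : ¬(k = i ∧ k ≠ 0) := fun h => hik h.1.symm
    rw [if_pos (show i = i ∧ i ≠ 0 from ⟨rfl, hi⟩), if_neg h1, if_neg h2]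
    simpa using ha2


lemma exists_nondeg (B : List ((Fin n → ℝ) × ℝ)) (x : Fin n → ℝ) {ε : ℝ} (hε : 0 < ε) :
    ∃ x', ‖x' - x‖ < ε ∧ ∀ bw ∈ B, ∀ i j : Fin (n+1), i ≠ j →
      surplus bw.1 x' i ≠ surplus bw.1 x' j := by
  classical
  set s := B.toFinset ×ˢ ((Finset.univ ×ˢ Finset.univ).filter
    fun pr : Fin (n+1) × Fin (n+1) => pr.1 ≠ pr.2) with hsdef
  have hne : ∀ m ∈ s, m.2.1 ≠ m.2.2 := by
    intro m hm
    have := (Finset.mem_product.1 hm).2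
    exact (Finset.mem_filter.1 this).2
  obtain ⟨d, hd⟩ := exists_common_dir s (fun m => coefVec m.2.1 - coefVec m.2.2)
    (fun m hm => pair_witness (hne m hm))
  obtain ⟨t, ht0, htε, hall⟩ := exists_param_avoid s
    (fun m => surplus m.1.1 x m.2.1 - surplus m.1.1 x m.2.2)
    (fun m => -(dotp (coefVec m.2.1 - coefVec m.2.2) d))
    (fun m hm => Or.inl (neg_ne_zero.2 (hd m hm)))
    (show 0 < ε / (‖d‖ + 1) by positivity)
  refine ⟨x + t • d, ?_, ?_⟩
  · have h1 : ‖x + t • d - x‖ = t * ‖d‖ := by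
      rw [add_sub_cancel_left, norm_smul, Real.norm_eq_abs, abs_of_pos ht0]
    rw [h1]
    have h2 : t * (‖d‖ + 1) < ε / (‖d‖ + 1) * (‖d‖ + 1) := by
      apply mul_lt_mul_of_pos_right htε; positivity
    have h3 : ε / (‖d‖ + 1) * (‖d‖ + 1) = ε := by field_simp
    nlinarith [norm_nonneg d]
  · intro bw hbw i j hij
    have hm : (bw, (i, j)) ∈ s := by
      rw [hsdef]
      refine Finset.mem_product.2 ⟨List.mem_toFinset.2 hbw, ?_⟩
      exact Finset.mem_filter.2 ⟨Finset.mem_product.2 ⟨Finset.mem_univ _, Finset.mem_univ _⟩, hij⟩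
    have h := hall _ hm
    simp only at h
    intro habs
    apply h
    rw [dotp_left_sub, dotp_coefVec, dotp_coefVec]
    have e1 : surplus bw.1 (x + t • d) i = surplus bw.1 x i - t * extVec d i :=
      surplus_add_smul _ _ _ _ _
    have e2 : surplus bw.1 (x + t • d) j = surplus bw.1 x j - t * extVec d j :=
      surplus_add_smul _ _ _ _ _
    rw [e1, e2] at habs
    linarith

lemma exists_generic_pair (B : List ((Fin n → ℝ) × ℝ)) (x y : Fin n → ℝ) {ε : ℝ} (hε : 0 < ε) :
    ∃ x' y', ‖x' - x‖ < ε ∧ ‖y' - y‖ < ε ∧ ∀ t ∈ Set.Icc (0:ℝ) 1, ∀ bw ∈ B,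
      (demandedSet bw.1 (x' + t • (y' - x'))).card ≤ 2 := by
  classical
  obtain ⟨x', hx', hnd⟩ := exists_nondeg B x hε
  set s3 := B.toFinset ×ˢ ((Finset.univ ×ˢ Finset.univ ×ˢ Finset.univ).filter
    fun tr : Fin (n+1) × Fin (n+1) × Fin (n+1) =>
      tr.1 ≠ tr.2.1 ∧ tr.2.1 ≠ tr.2.2 ∧ tr.1 ≠ tr.2.2) with hs3def
  have hmem : ∀ m ∈ s3, m.1 ∈ B ∧ m.2.1 ≠ m.2.2.1 ∧ m.2.2.1 ≠ m.2.2.2 ∧ m.2.1 ≠ m.2.2.2 := by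
    intro m hm
    obtain ⟨h1, h2⟩ := Finset.mem_product.1 hm
    exact ⟨List.mem_toFinset.1 h1, (Finset.mem_filter.1 h2).2⟩
  obtain ⟨d, hd⟩ := exists_common_dir s3 (fun m =>
      (surplus m.1.1 x' m.2.2.1 - surplus m.1.1 x' m.2.2.2) •
        (coefVec m.2.1 - coefVec m.2.2.1) -
      (surplus m.1.1 x' m.2.1 - surplus m.1.1 x' m.2.2.1) •
        (coefVec m.2.2.1 - coefVec m.2.2.2))
    (fun m hm => by
      obtain ⟨hb, h12, h23, h13⟩ := hmem m hm
      exact triple_witness h12 h23 h13 (sub_ne_zero.2 (hnd m.1 hb _ _ h23)))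
  obtain ⟨t, ht0, htε, hall⟩ := exists_param_avoid s3
    (fun m => (surplus m.1.1 x' m.2.2.1 - surplus m.1.1 x' m.2.2.2) *
        (surplus m.1.1 y m.2.1 - surplus m.1.1 y m.2.2.1) -
      (surplus m.1.1 x' m.2.1 - surplus m.1.1 x' m.2.2.1) *
        (surplus m.1.1 y m.2.2.1 - surplus m.1.1 y m.2.2.2))
    (fun m => -(dotp ((surplus m.1.1 x' m.2.2.1 - surplus m.1.1 x' m.2.2.2) •
        (coefVec m.2.1 - coefVec m.2.2.1) -
      (surplus m.1.1 x' m.2.1 - surplus m.1.1 x' m.2.2.1) •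
        (coefVec m.2.2.1 - coefVec m.2.2.2)) d))
    (fun m hm => Or.inl (neg_ne_zero.2 (hd m hm)))
    (show 0 < ε / (‖d‖ + 1) by positivity)
  refine ⟨x', y + t • d, hx', ?_, ?_⟩
  · have h1 : ‖y + t • d - y‖ = t * ‖d‖ := by
      rw [add_sub_cancel_left, norm_smul, Real.norm_eq_abs, abs_of_pos ht0]
    rw [h1]
    have h2 : t * (‖d‖ + 1) < ε / (‖d‖ + 1) * (‖d‖ + 1) := by
      apply mul_lt_mul_of_pos_right htε; positivity
    have h3 : ε / (‖d‖ + 1) * (‖d‖ + 1) = ε := by field_simp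
    nlinarith [norm_nonneg d]
  · intro t' ht' bw hbw
    by_contra hcard
    push_neg at hcard
    obtain ⟨i, j, k, hi, hj, hk, hij, hik, hjk⟩ := Finset.two_lt_card_iff.1 hcard
    have hms : (bw, (i, j, k)) ∈ s3 := by
      rw [hs3def]
      refine Finset.mem_product.2 ⟨List.mem_toFinset.2 hbw, Finset.mem_filter.2
        ⟨Finset.mem_product.2 ⟨Finset.mem_univ _, Finset.mem_product.2
          ⟨Finset.mem_univ _, Finset.mem_univ _⟩⟩, hij, hjk, hik⟩⟩
    have hsi : surplus bw.1 (x' + t' • (y + t • d - x')) i =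
        maxSurplus bw.1 (x' + t' • (y + t • d - x')) := mem_demandedSet_iff_surplus.1 hi
    have hsj : surplus bw.1 (x' + t' • (y + t • d - x')) j =
        maxSurplus bw.1 (x' + t' • (y + t • d - x')) := mem_demandedSet_iff_surplus.1 hj
    have hsk : surplus bw.1 (x' + t' • (y + t • d - x')) k =
        maxSurplus bw.1 (x' + t' • (y + t • d - x')) := mem_demandedSet_iff_surplus.1 hk
    have hexp : ∀ κ : Fin (n+1), surplus bw.1 (x' + t' • (y + t • d - x')) κ =
        surplus bw.1 x' κ - t' * (extVec (y + t • d - x') κ) := fun κ =>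
      surplus_add_smul _ _ _ _ _
    -- abbreviations as equalities (not local defs)
    have hA1 : surplus bw.1 x' i - surplus bw.1 x' j ≠ 0 :=
      sub_ne_zero.2 (hnd bw hbw _ _ hij)
    -- expansion of extVec (y + t•d - x')
    have hvd : ∀ κ, extVec (y + t • d - x') κ = extVec y κ + t * extVec d κ - extVec x' κ := by
      intro κ
      rw [extVec_sub, extVec_add, extVec_smul]
    have e1 := hexp i; rw [hsi] at e1; rw [hvd i] at e1
    have e2 := hexp j; rw [hsj] at e2; rw [hvd j] at e2
    have e3 := hexp k; rw [hsk] at e3; rw [hvd k] at e3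
    -- the guaranteed nonvanishing
    have h := hall (bw, (i, j, k)) hms
    dsimp only at h
    rw [dotp_left_sub, dotp_left_smul, dotp_left_smul, dotp_left_sub, dotp_left_sub,
      dotp_coefVec, dotp_coefVec, dotp_coefVec] at h
    -- variables
    rcases eq_or_lt_of_le ht'.1 with h0 | hpos
    · -- t' = 0 : surplus at segment point equals surplus at x'
      apply hA1
      have g1 := hexp i; rw [hsi] at g1
      have g2 := hexp j; rw [hsj] at g2
      rw [← h0] at g1 g2
      simp at g1 g2
      rw [← g1, ← g2]
      ring
    · apply h
      -- from equal maxima: linear relations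
      have r1 : (surplus bw.1 x' i - surplus bw.1 x' j) =
          t' * ((extVec y i + t * extVec d i - extVec x' i) -
            (extVec y j + t * extVec d j - extVec x' j)) := by
        linear_combination e2 - e1
      have r2 : (surplus bw.1 x' j - surplus bw.1 x' k) =
          t' * ((extVec y j + t * extVec d j - extVec x' j) -
            (extVec y k + t * extVec d k - extVec x' k)) := by
        linear_combination e3 - e2
      -- goal : the avoided expression equals zero ; derive from r1, r2
      -- Let u1 := extVec y i - extVec y j etc.
      have expand : (surplus bw.1 x' j - surplus bw.1 x' k) *
            (surplus bw.1 y i - surplus bw.1 y j) -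
          (surplus bw.1 x' i - surplus bw.1 x' j) *
            (surplus bw.1 y j - surplus bw.1 y k) +
          t * -((surplus bw.1 x' j - surplus bw.1 x' k) * (extVec d i - extVec d j) -
            (surplus bw.1 x' i - surplus bw.1 x' j) * (extVec d j - extVec d k)) =
          (surplus bw.1 x' j - surplus bw.1 x' k) *
            ((surplus bw.1 y i - t * extVec d i) - (surplus bw.1 y j - t * extVec d j)) -
          (surplus bw.1 x' i - surplus bw.1 x' j) *
            ((surplus bw.1 y j - t * extVec d j) - (surplus bw.1 y k - t * extVec d k)) := by
        ring
      rw [expand]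
      -- now express surplus y κ - t * extVec d κ via surplus x' and the r's
      have hyv : ∀ κ, surplus bw.1 y κ = extVec bw.1 κ - extVec y κ := fun κ => rfl
      rw [hyv i, hyv j, hyv k]
      have ht'ne : t' ≠ 0 := ne_of_gt hpos
      -- multiply out by t'
      have key : t' * ((surplus bw.1 x' j - surplus bw.1 x' k) *
            ((extVec bw.1 i - extVec y i - t * extVec d i) -
              (extVec bw.1 j - extVec y j - t * extVec d j)) -
          (surplus bw.1 x' i - surplus bw.1 x' j) *
            ((extVec bw.1 j - extVec y j - t * extVec d j) -
              (extVec bw.1 k - extVec y k - t * extVec d k))) = 0 := by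
        have hsx : ∀ κ, surplus bw.1 x' κ = extVec bw.1 κ - extVec x' κ := fun κ => rfl
        rw [hsx i, hsx j] at r1
        rw [hsx j, hsx k] at r2
        rw [hsx i, hsx j, hsx k]
        linear_combination (extVec bw.1 j - extVec x' j - (extVec bw.1 k - extVec x' k)) * r1 -
          (extVec bw.1 i - extVec x' i - (extVec bw.1 j - extVec x' j)) * r2
      rcases mul_eq_zero.1 key with hcase | hcase
      · exact absurd hcase ht'ne
      · exact hcase


lemma negvsup_neg (b p v : Fin n → ℝ) :
    negvsup b p (-v) = (demandedSet b p).sup' (demandedSet_nonempty b p)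
      (fun κ => extVec v κ) := by
  unfold negvsup
  apply Finset.sup'_congr _ rfl
  intro κ _
  rw [extVec_neg, neg_neg]

lemma width_eq_pairsum (b p v : Fin n → ℝ) (hcard : (demandedSet b p).card ≤ 2) :
    negvsup b p v + negvsup b p (-v) =
      ∑ pr ∈ (Finset.univ ×ˢ Finset.univ).filter
          (fun pr : Fin (n+1) × Fin (n+1) => pr.1 < pr.2),
        (if demandedSet b p = {pr.1, pr.2} then |extVec v pr.1 - extVec v pr.2| else 0) := by
  classical
  have hne := demandedSet_nonempty b p
  rcases eq_or_lt_of_le (show 1 ≤ _ from hne.card_pos) with h1 | h2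
  · -- card = 1
    obtain ⟨a, hD⟩ := Finset.card_eq_one.1 h1.symm
    have hsingle : ∀ w : Fin n → ℝ, negvsup b p w = -extVec w a := by
      intro w
      apply le_antisymm
      · apply Finset.sup'_le
        intro κ hκ
        rw [hD, Finset.mem_singleton] at hκ
        rw [hκ]
      · exact Finset.le_sup' (fun κ => -extVec w κ) (hD ▸ Finset.mem_singleton_self a)
    rw [hsingle v, hsingle (-v), extVec_neg]
    rw [Finset.sum_eq_zero]
    · ring
    · intro pr hpr
      have hlt := (Finset.mem_filter.1 hpr).2
      rw [if_neg]
      intro hDeq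
      have : ({pr.1, pr.2} : Finset (Fin (n+1))).card = 2 :=
        Finset.card_pair (ne_of_lt hlt)
      rw [← hDeq, hD, Finset.card_singleton] at this
      omega
  · -- card = 2
    have hc2 : (demandedSet b p).card = 2 := le_antisymm hcard h2
    obtain ⟨a, c, hac, hD⟩ := Finset.card_eq_two.1 hc2
    have main : ∀ a c : Fin (n+1), a < c → demandedSet b p = {a, c} →
        negvsup b p v + negvsup b p (-v) =
        ∑ pr ∈ (Finset.univ ×ˢ Finset.univ).filter
            (fun pr : Fin (n+1) × Fin (n+1) => pr.1 < pr.2),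
          (if demandedSet b p = {pr.1, pr.2} then |extVec v pr.1 - extVec v pr.2| else 0) := by
      intro a c hlt hDeq
      have hmem_a : a ∈ demandedSet b p := by rw [hDeq]; simp
      have hmem_c : c ∈ demandedSet b p := by rw [hDeq]; simp
      have hpairsup : ∀ w : Fin n → ℝ, negvsup b p w = max (-extVec w a) (-extVec w c) := by
        intro w
        apply le_antisymm
        · apply Finset.sup'_le
          intro κ hκ
          rw [hDeq, Finset.mem_insert, Finset.mem_singleton] at hκ
          rcases hκ with rfl | rfl
          · exact le_max_left _ _
          · exact le_max_right _ _
        · apply max_le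
          · exact Finset.le_sup' (fun κ => -extVec w κ) hmem_a
          · exact Finset.le_sup' (fun κ => -extVec w κ) hmem_c
      have hLHS : negvsup b p v + negvsup b p (-v) = |extVec v a - extVec v c| := by
        rw [hpairsup v, hpairsup (-v), extVec_neg, extVec_neg, neg_neg, neg_neg]
        rcases le_total (extVec v a) (extVec v c) with h | h
        · rw [max_eq_left (neg_le_neg h), max_eq_right h, abs_of_nonpos (by linarith)]
          ring
        · rw [max_eq_right (neg_le_neg h), max_eq_left h, abs_of_nonneg (by linarith)]
          ring
      rw [hLHS]
      rw [Finset.sum_eq_single (a, c)]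
      · rw [if_pos hDeq]
      · intro pr hpr hprne
        have hplt := (Finset.mem_filter.1 hpr).2
        rw [if_neg]
        intro hDeq'
        apply hprne
        have hset : ({a, c} : Finset (Fin (n+1))) = {pr.1, pr.2} := by
          rw [← hDeq, hDeq']
        have hmem1 : pr.1 ∈ ({a, c} : Finset (Fin (n+1))) := by
          rw [hset]; simp
        have hmem2 : pr.2 ∈ ({a, c} : Finset (Fin (n+1))) := by
          rw [hset]; simp
        rw [Finset.mem_insert, Finset.mem_singleton] at hmem1 hmem2
        rcases hmem1 with h1 | h1
        · rcases hmem2 with h2 | h2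
          · exfalso; rw [h1] at hplt; rw [h2] at hplt; exact lt_irrefl a hplt
          · exact Prod.ext h1 h2
        · exfalso
          rcases hmem2 with h2 | h2
          · rw [h1, h2] at hplt; exact lt_asymm hlt hplt
          · rw [h1, h2] at hplt; exact lt_irrefl c hplt
      · intro habs
        exfalso
        apply habs
        refine Finset.mem_filter.2 ⟨Finset.mem_product.2 ⟨Finset.mem_univ _, Finset.mem_univ _⟩, hlt⟩
    rcases lt_or_gt_of_ne hac with hlt | hgt
    · exact main a c hlt hD
    · exact main c a hgt (by rw [hD, Finset.pair_comm])

lemma jump_nonneg (B : List ((Fin n → ℝ) × ℝ)) (p v : Fin n → ℝ)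
    (hcard : ∀ bw ∈ B, (demandedSet bw.1 p).card ≤ 2)
    (hmw : ∀ i i' : Fin (n+1), i ≠ i' → 0 ≤ marginalWeight B p i i') :
    0 ≤ slopeIU B p v + slopeIU B p (-v) := by
  classical
  set Pairs := (Finset.univ ×ˢ Finset.univ).filter
    (fun pr : Fin (n+1) × Fin (n+1) => pr.1 < pr.2) with hPdef
  have step1 : slopeIU B p v + slopeIU B p (-v) =
      (B.map (fun bw => ∑ pr ∈ Pairs,
        (if demandedSet bw.1 p = {pr.1, pr.2}
          then bw.2 * |extVec v pr.1 - extVec v pr.2| else 0))).sum := by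
    unfold slopeIU
    rw [← list_sum_map_add]
    congr 1
    apply List.map_congr_left
    intro bw hbw
    rw [← mul_add, width_eq_pairsum bw.1 p v (hcard bw hbw), Finset.mul_sum]
    congr 1
    funext pr
    by_cases hD : demandedSet bw.1 p = {pr.1, pr.2}
    · rw [if_pos hD, if_pos hD]
    · rw [if_neg hD, if_neg hD, mul_zero]
  rw [step1, list_sum_map_finsetSum]
  apply Finset.sum_nonneg
  intro pr hpr
  have hne : pr.1 ≠ pr.2 := ne_of_lt (Finset.mem_filter.1 hpr).2
  have step2 : (B.map (fun bw =>
      if demandedSet bw.1 p = {pr.1, pr.2}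
        then bw.2 * |extVec v pr.1 - extVec v pr.2| else 0)).sum =
      |extVec v pr.1 - extVec v pr.2| * marginalWeight B p pr.1 pr.2 := by
    unfold marginalWeight
    rw [← list_sum_map_mul_left]
    congr 1
    apply List.map_congr_left
    intro bw hbw
    by_cases hdem : Demands bw.1 p pr.1 ∧ Demands bw.1 p pr.2
    · have hsub : ({pr.1, pr.2} : Finset (Fin (n+1))) ⊆ demandedSet bw.1 p := by
        intro κ hκ
        rw [Finset.mem_insert, Finset.mem_singleton] at hκ
        rcases hκ with rfl | rfl
        · exact mem_demandedSet.2 hdem.1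
        · exact mem_demandedSet.2 hdem.2
      have hcd : (demandedSet bw.1 p).card ≤ ({pr.1, pr.2} : Finset (Fin (n+1))).card := by
        rw [Finset.card_pair hne]
        exact hcard bw hbw
      have hDeq : demandedSet bw.1 p = {pr.1, pr.2} :=
        (Finset.eq_of_subset_of_card_le hsub hcd).symm
      rw [if_pos hDeq, if_pos hdem]
      ring
    · have hDne : demandedSet bw.1 p ≠ {pr.1, pr.2} := by
        intro hDeq
        apply hdem
        constructor
        · exact mem_demandedSet.1 (by rw [hDeq]; simp)
        · exact mem_demandedSet.1 (by rw [hDeq]; simp)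
      rw [if_neg hDne, if_neg hdem, mul_zero]
  rw [step2]
  exact mul_nonneg (abs_nonneg _) (hmw pr.1 pr.2 hne)


lemma one_dim (φ : ℝ → ℝ) (hφ : Continuous φ)
    (hmid : ∀ t ∈ Set.Icc (0:ℝ) 1, ∃ δ > 0, ∀ d : ℝ, 0 < d → d < δ →
      2 * φ t ≤ φ (t - d) + φ (t + d)) :
    ∀ lam ∈ Set.Icc (0:ℝ) 1, φ lam ≤ (1 - lam) * φ 0 + lam * φ 1 := by
  set h : ℝ → ℝ := fun t => φ t - ((1 - t) * φ 0 + t * φ 1) with hhdef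
  have hhc : Continuous h := by
    apply hφ.sub
    exact ((continuous_const.sub continuous_id).mul continuous_const).add
      (continuous_id.mul continuous_const)
  have hhmid : ∀ t ∈ Set.Icc (0:ℝ) 1, ∃ δ > 0, ∀ d : ℝ, 0 < d → d < δ →
      2 * h t ≤ h (t - d) + h (t + d) := by
    intro t ht
    obtain ⟨δ, hδ, hm⟩ := hmid t ht
    refine ⟨δ, hδ, fun d hd hdδ => ?_⟩
    have := hm d hd hdδ
    simp only [hhdef]
    ring_nf
    ring_nf at this
    linarith
  obtain ⟨t₀, ht₀, hmax⟩ := isCompact_Icc.exists_isMaxOn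
    (Set.nonempty_Icc.2 zero_le_one) hhc.continuousOn
  intro lam hlam
  have hle : h lam ≤ h t₀ := hmax hlam
  have hend0 : h 0 = 0 := by simp [hhdef]
  have hend1 : h 1 = 0 := by simp [hhdef]
  have ht₀le : h t₀ ≤ 0 := by
    by_contra hpos
    push_neg at hpos
    set S := Set.Icc (0:ℝ) 1 ∩ h ⁻¹' {h t₀} with hSdef
    have hSne : S.Nonempty := ⟨t₀, ht₀, rfl⟩
    have hSbdd : BddAbove S := ⟨1, fun t ht => ht.1.2⟩
    have hSclosed : IsClosed S := isClosed_Icc.inter (isClosed_singleton.preimage hhc)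
    have htS : sSup S ∈ S := hSclosed.csSup_mem hSne hSbdd
    obtain ⟨hmem, heq⟩ := htS
    rw [Set.mem_preimage, Set.mem_singleton_iff] at heq
    have h0lt : 0 < sSup S := by
      rcases lt_or_eq_of_le hmem.1 with h' | h'
      · exact h'
      · exfalso; rw [← h'] at heq; rw [hend0] at heq; linarith
    have hlt1 : sSup S < 1 := by
      rcases lt_or_eq_of_le hmem.2 with h' | h'
      · exact h'
      · exfalso; rw [h'] at heq; rw [hend1] at heq; linarith
    obtain ⟨δ, hδ, hm⟩ := hhmid (sSup S) hmem
    set d := min (δ/2) (min ((1 - sSup S)/2) (sSup S / 2)) with hddef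
    have hd0 : 0 < d := by
      apply lt_min (by linarith)
      exact lt_min (by linarith) (by linarith)
    have hd1 : d ≤ (1 - sSup S)/2 := le_trans (min_le_right _ _) (min_le_left _ _)
    have hd2 : d ≤ sSup S / 2 := le_trans (min_le_right _ _) (min_le_right _ _)
    have hdδ : d < δ := lt_of_le_of_lt (min_le_left _ _) (by linarith)
    have key := hm d hd0 hdδ
    have hupmem : sSup S + d ∈ Set.Icc (0:ℝ) 1 := ⟨by linarith [hmem.1], by linarith⟩
    have hup : h (sSup S + d) ≤ h t₀ := hmax hupmem
    have hdown : h (sSup S - d) ≤ h t₀ :=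
      hmax ⟨by linarith, by linarith [hmem.2]⟩
    have hge : h t₀ ≤ h (sSup S + d) := by rw [heq] at key; linarith
    have hmem' : sSup S + d ∈ S := ⟨hupmem, le_antisymm hup hge⟩
    have := le_csSup hSbdd hmem'
    linarith
  have hφlam : φ lam = h lam + ((1 - lam) * φ 0 + lam * φ 1) := by simp [hhdef]
  rw [hφlam]
  linarith


lemma segment_mem_P {P : Set (Fin n → ℝ)} (hPconv : Convex ℝ P) {x y : Fin n → ℝ}
    (hx : x ∈ P) (hy : y ∈ P) {t : ℝ} (ht : t ∈ Set.Icc (0:ℝ) 1) :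
    x + t • (y - x) ∈ P := by
  have h := hPconv hx hy (by linarith [ht.2] : (0:ℝ) ≤ 1 - t) ht.1 (by ring)
  have : (1 - t) • x + t • y = x + t • (y - x) := by module
  rwa [this] at h

lemma convex_of_marginal (B : List ((Fin n → ℝ) × ℝ)) (P : Set (Fin n → ℝ))
    (hPopen : IsOpen P) (hPconv : Convex ℝ P)
    (hmw : ∀ q ∈ P, ∀ i i' : Fin (n+1), i ≠ i' → 0 ≤ marginalWeight B q i i') :
    ConvexOn ℝ P (indirectUtility B) := by
  refine ⟨hPconv, fun x hx y hy a b ha hb hab => ?_⟩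
  -- reduce to the form x + b • (y - x)
  have hxy : a • x + b • y = x + b • (y - x) := by
    have ha' : a = 1 - b := by linarith
    rw [ha']; module
  rw [hxy]
  have hb1 : b ≤ 1 := by linarith
  -- compact segment inside the open set
  set K := (fun t : ℝ => x + t • (y - x)) '' Set.Icc 0 1 with hKdef
  have hKP : K ⊆ P := by
    rintro p ⟨t, ht, rfl⟩
    exact segment_mem_P hPconv hx hy ht
  have hKc : IsCompact K := isCompact_Icc.image
    (continuous_const.add (continuous_id.smul continuous_const))
  obtain ⟨ρ, hρ, hthick⟩ := hKc.exists_thickening_subset_open hPopen hKP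
  -- approximation
  have main : ∀ k : ℕ, ∃ x' y' : Fin n → ℝ,
      ‖x' - x‖ < min (ρ/2) (1/(k+1)) ∧ ‖y' - y‖ < min (ρ/2) (1/(k+1)) ∧
      indirectUtility B (x' + b • (y' - x')) ≤
        (1 - b) * indirectUtility B x' + b * indirectUtility B y' := by
    intro k
    have hεpos : 0 < min (ρ/2) (1/(k+1:ℝ)) := by
      apply lt_min (by linarith)
      positivity
    obtain ⟨x', y', hx', hy', hgen⟩ := exists_generic_pair B x y hεpos
    refine ⟨x', y', hx', hy', ?_⟩
    have hx'2 : ‖x' - x‖ < ρ/2 := lt_of_lt_of_le hx' (min_le_left _ _)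
    have hy'2 : ‖y' - y‖ < ρ/2 := lt_of_lt_of_le hy' (min_le_left _ _)
    -- every segment point is in P
    have hseg : ∀ t ∈ Set.Icc (0:ℝ) 1, x' + t • (y' - x') ∈ P := by
      intro t ht
      apply hthick
      rw [Metric.mem_thickening_iff]
      refine ⟨x + t • (y - x), ⟨t, ht, rfl⟩, ?_⟩
      rw [dist_eq_norm]
      have hrw : x' + t • (y' - x') - (x + t • (y - x)) =
          (1 - t) • (x' - x) + t • (y' - y) := by module
      rw [hrw]
      calc ‖(1 - t) • (x' - x) + t • (y' - y)‖
          ≤ ‖(1 - t) • (x' - x)‖ + ‖t • (y' - y)‖ := norm_add_le _ _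
        _ = (1 - t) * ‖x' - x‖ + t * ‖y' - y‖ := by
            rw [norm_smul, norm_smul, Real.norm_eq_abs, Real.norm_eq_abs,
              abs_of_nonneg (by linarith [ht.2]), abs_of_nonneg ht.1]
        _ < ρ := by nlinarith [ht.1, ht.2, norm_nonneg (x' - x), norm_nonneg (y' - y)]
    -- one-dimensional convexity along the segment
    have hmid : ∀ t ∈ Set.Icc (0:ℝ) 1, ∃ δ > 0, ∀ d : ℝ, 0 < d → d < δ →
        2 * indirectUtility B (x' + t • (y' - x')) ≤
          indirectUtility B (x' + (t - d) • (y' - x')) +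
          indirectUtility B (x' + (t + d) • (y' - x')) := by
      intro t ht
      set p := x' + t • (y' - x') with hpdef
      have hpP : p ∈ P := hseg t ht
      obtain ⟨δa, hδa, hsa⟩ := f_step B p (y' - x')
      obtain ⟨δb, hδb, hsb⟩ := f_step B p (-(y' - x'))
      refine ⟨min δa δb, lt_min hδa hδb, fun d hd hdδ => ?_⟩
      have e1 : x' + (t + d) • (y' - x') = p + d • (y' - x') := by
        rw [hpdef]; module
      have e2 : x' + (t - d) • (y' - x') = p + d • (-(y' - x')) := by
        rw [hpdef]; module
      rw [e1, e2]
      rw [hsa d hd.le (lt_of_lt_of_le hdδ (min_le_left _ _)),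
        hsb d hd.le (lt_of_lt_of_le hdδ (min_le_right _ _))]
      have hjump := jump_nonneg B p (y' - x')
        (fun bw hbw => hgen t ht bw hbw)
        (fun i i' hne => hmw p hpP i i' hne)
      nlinarith [hjump, hd.le]
    have key := one_dim (fun t => indirectUtility B (x' + t • (y' - x')))
      ((continuous_indirectUtility B).comp
        (continuous_const.add (continuous_id.smul continuous_const)))
      hmid b ⟨hb, hb1⟩
    have q0 : indirectUtility B (x' + (0:ℝ) • (y' - x')) = indirectUtility B x' := by
      rw [show x' + (0:ℝ) • (y' - x') = x' by module]
    have q1 : indirectUtility B (x' + (1:ℝ) • (y' - x')) = indirectUtility B y' := by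
      rw [show x' + (1:ℝ) • (y' - x') = y' by module]
    rw [q0, q1] at key
    exact key
  choose xs ys hxs hys hineq using main
  -- limits
  have hbound : Filter.Tendsto (fun k : ℕ => 1/(k+1:ℝ)) Filter.atTop (nhds 0) :=
    tendsto_one_div_add_atTop_nhds_zero_nat
  have hxtend : Filter.Tendsto xs Filter.atTop (nhds x) := by
    rw [tendsto_iff_dist_tendsto_zero]
    apply squeeze_zero (fun k => dist_nonneg)
      (fun k => le_of_lt (lt_of_lt_of_le (by rw [dist_eq_norm]; exact hxs k) (min_le_right _ _)))
      hbound
  have hytend : Filter.Tendsto ys Filter.atTop (nhds y) := by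
    rw [tendsto_iff_dist_tendsto_zero]
    apply squeeze_zero (fun k => dist_nonneg)
      (fun k => le_of_lt (lt_of_lt_of_le (by rw [dist_eq_norm]; exact hys k) (min_le_right _ _)))
      hbound
  have hcont := continuous_indirectUtility B
  have hargt : Filter.Tendsto (fun k => xs k + b • (ys k - xs k)) Filter.atTop
      (nhds (x + b • (y - x))) :=
    hxtend.add ((hytend.sub hxtend).const_smul b)
  have hLHS : Filter.Tendsto (fun k => indirectUtility B (xs k + b • (ys k - xs k)))
      Filter.atTop (nhds (indirectUtility B (x + b • (y - x)))) :=
    (hcont.tendsto _).comp hargt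
  have hRHS : Filter.Tendsto
      (fun k => (1 - b) * indirectUtility B (xs k) + b * indirectUtility B (ys k))
      Filter.atTop (nhds ((1 - b) * indirectUtility B x + b * indirectUtility B y)) := by
    apply Filter.Tendsto.add
    · exact (((hcont.tendsto x).comp hxtend).const_mul (1 - b))
    · exact (((hcont.tendsto y).comp hytend).const_mul b)
  have hfin := le_of_tendsto_of_tendsto' hLHS hRHS hineq
  have ha' : a = 1 - b := by linarith
  rw [ha']
  exact hfin


lemma marginal_of_convex (B : List ((Fin n → ℝ) × ℝ)) (P : Set (Fin n → ℝ))
    (hPopen : IsOpen P) (hconv : ConvexOn ℝ P (indirectUtility B))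
    {q : Fin n → ℝ} (hq : q ∈ P) {i i' : Fin (n+1)} (hii : i ≠ i') :
    0 ≤ marginalWeight B q i i' := by
  classical
  -- the perturbation direction z
  set χ : Fin (n+1) → ℝ := fun κ => if κ = i ∨ κ = i' then 0 else 1 with hχdef
  set z : Fin n → ℝ := fun j => χ j.succ - χ 0 with hzdef
  have hz : ∀ κ, extVec z κ = χ κ - χ 0 := by
    intro κ
    induction κ using Fin.cases with
    | zero => rw [extVec_zero]; ring
    | succ j => rw [extVec_succ]
  have hχi : χ i = 0 := if_pos (Or.inl rfl)
  have hχi' : χ i' = 0 := if_pos (Or.inr rfl)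
  have hχother : ∀ κ, κ ≠ i → κ ≠ i' → χ κ = 1 := fun κ h1 h2 => if_neg (by tauto)
  have hzmin : ∀ κ, extVec z i ≤ extVec z κ := by
    intro κ
    rw [hz, hz, hχi]
    by_cases h1 : κ = i
    · rw [h1, hχi]
    · by_cases h2 : κ = i'
      · rw [h2, hχi']
      · rw [hχother κ h1 h2]; linarith
  have hzii' : extVec z i = extVec z i' := by rw [hz, hz, hχi, hχi']
  have hzstrict : ∀ κ, κ ≠ i → κ ≠ i' → extVec z i < extVec z κ := by
    intro κ h1 h2
    rw [hz, hz, hχi, hχother κ h1 h2]; linarith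
  -- the test direction v
  set κ0 : Fin (n+1) := if i = 0 then i' else i with hκ0def
  have hκ0ne : κ0 ≠ 0 := by
    rw [hκ0def]
    by_cases hi0 : i = 0
    · rw [if_pos hi0]; intro h; exact hii (by rw [hi0, h])
    · rw [if_neg hi0]; exact hi0
  have hκ0mem : κ0 = i ∨ κ0 = i' := by
    rw [hκ0def]
    by_cases hi0 : i = 0
    · rw [if_pos hi0]; exact Or.inr rfl
    · rw [if_neg hi0]; exact Or.inl rfl
  set v : Fin n → ℝ := coefVec κ0 with hvdef
  have hv : ∀ κ, extVec v κ = if κ = κ0 then 1 else 0 := by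
    intro κ
    rw [hvdef, extVec_coefVec]
    by_cases h : κ = κ0
    · rw [if_pos ⟨h, h ▸ hκ0ne⟩, if_pos h]
    · rw [if_neg (fun hc => h hc.1), if_neg h]
  -- perturb to q'
  obtain ⟨δ₁, hδ₁, hstep⟩ := demanded_step_all B q z
  obtain ⟨r, hr, hball⟩ := Metric.isOpen_iff.1 hPopen q hq
  set s := min (δ₁/2) (r/(2*(‖z‖+1))) with hsdef
  have hs0 : 0 < s := lt_min (by linarith) (by positivity)
  have hsδ : s < δ₁ := lt_of_le_of_lt (min_le_left _ _) (by linarith)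
  set q' := q + s • z with hq'def
  have hq'dist : ‖q' - q‖ < r/2 := by
    rw [hq'def, add_sub_cancel_left, norm_smul, Real.norm_eq_abs, abs_of_pos hs0]
    have h1 : s ≤ r/(2*(‖z‖+1)) := min_le_right _ _
    have h3 : (0:ℝ) < ‖z‖ + 1 := by positivity
    have h2 : s*(‖z‖+1) ≤ r/(2*(‖z‖+1))*(‖z‖+1) := mul_le_mul_of_nonneg_right h1 h3.le
    have h4 : r/(2*(‖z‖+1))*(‖z‖+1) = r/2 := by field_simp
    nlinarith [norm_nonneg z, hs0]
  have hq'P : q' ∈ P := hball (by rw [Metric.mem_ball, dist_eq_norm]; linarith)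
  have hDq' := hstep s hs0 hsδ
  -- per-bid width identity at q'
  have hwid : ∀ bw ∈ B, negvsup bw.1 q' v + negvsup bw.1 q' (-v) =
      (if Demands bw.1 q i ∧ Demands bw.1 q i' then (1:ℝ) else 0) := by
    intro bw hbw
    have hfil := hDq' bw hbw
    have hmemq' : ∀ κ, κ ∈ demandedSet bw.1 q' ↔
        (κ ∈ demandedSet bw.1 q ∧ -extVec z κ = negvsup bw.1 q z) := by
      intro κ
      rw [hfil, Finset.mem_filter]
    by_cases H : Demands bw.1 q i ∧ Demands bw.1 q i'
    · have hiD : i ∈ demandedSet bw.1 q := mem_demandedSet.2 H.1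
      have hi'D : i' ∈ demandedSet bw.1 q := mem_demandedSet.2 H.2
      have hnsup : negvsup bw.1 q z = -extVec z i := by
        apply le_antisymm
        · apply Finset.sup'_le; intro κ _; exact neg_le_neg (hzmin κ)
        · exact Finset.le_sup' (fun κ => -extVec z κ) hiD
      have hD'eq : demandedSet bw.1 q' = {i, i'} := by
        ext κ
        rw [hmemq' κ, Finset.mem_insert, Finset.mem_singleton]
        constructor
        · rintro ⟨hκD, hκz⟩
          by_contra hcon
          push_neg at hcon
          have hstrict := hzstrict κ hcon.1 hcon.2
          rw [hnsup] at hκz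
          have : extVec z κ = extVec z i := by linarith [neg_eq_iff_eq_neg.1 hκz]
          linarith
        · rintro (rfl | rfl)
          · exact ⟨hiD, by rw [hnsup]⟩
          · exact ⟨hi'D, by rw [hnsup, hzii']⟩
      rw [if_pos H]
      have hsup : ∀ w : Fin n → ℝ, negvsup bw.1 q' w = max (-extVec w i) (-extVec w i') := by
        intro w
        apply le_antisymm
        · apply Finset.sup'_le; intro κ hκ
          rw [hD'eq, Finset.mem_insert, Finset.mem_singleton] at hκ
          rcases hκ with rfl | rfl
          exacts [le_max_left _ _, le_max_right _ _]
        · apply max_le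
          · exact Finset.le_sup' (fun κ => -extVec w κ) (by rw [hD'eq]; simp)
          · exact Finset.le_sup' (fun κ => -extVec w κ) (by rw [hD'eq]; simp)
      rw [hsup v, hsup (-v), extVec_neg, extVec_neg, neg_neg, neg_neg]
      rcases hκ0mem with h | h
      · rw [hv i, hv i', if_pos h.symm, if_neg (fun hc : i' = κ0 => hii (hc.trans h).symm)]
        norm_num
      · rw [hv i, hv i', if_pos h.symm, if_neg (fun hc : i = κ0 => hii (hc.trans h))]
        norm_num
    · rw [if_neg H]
      by_cases hκ0D' : κ0 ∈ demandedSet bw.1 q'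
      · have hnk := (hmemq' κ0).1 hκ0D'
        have hzκ0 : extVec z κ0 = extVec z i := by
          rcases hκ0mem with h | h
          · rw [h]
          · rw [h, ← hzii']
        have hnsup : negvsup bw.1 q z = -extVec z i := by rw [← hnk.2, hzκ0]
        have hsub : ∀ κ ∈ demandedSet bw.1 q', κ = κ0 := by
          intro κ hκ
          obtain ⟨hκD, hκz⟩ := (hmemq' κ).1 hκ
          rw [hnsup] at hκz
          have hκpair : κ = i ∨ κ = i' := by
            by_contra hcon
            push_neg at hcon
            have hstrict := hzstrict κ hcon.1 hcon.2
            have : extVec z κ = extVec z i := by linarith [neg_eq_iff_eq_neg.1 hκz]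
            linarith
          by_contra hκne
          apply H
          rcases hκpair with rfl | rfl
          · rcases hκ0mem with h0 | h0
            · exact absurd h0.symm hκne
            · exact ⟨mem_demandedSet.1 hκD, mem_demandedSet.1 (h0 ▸ hnk.1)⟩
          · rcases hκ0mem with h0 | h0
            · exact ⟨mem_demandedSet.1 (h0 ▸ hnk.1), mem_demandedSet.1 hκD⟩
            · exact absurd h0.symm hκne
        have hD'single : demandedSet bw.1 q' = {κ0} :=
          Finset.eq_singleton_iff_unique_mem.2 ⟨hκ0D', hsub⟩
        have hsing : ∀ w : Fin n → ℝ, negvsup bw.1 q' w = -extVec w κ0 := by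
          intro w
          apply le_antisymm
          · apply Finset.sup'_le; intro κ hκ
            rw [hD'single, Finset.mem_singleton] at hκ
            rw [hκ]
          · exact Finset.le_sup' (fun κ => -extVec w κ) (by rw [hD'single]; simp)
        rw [hsing v, hsing (-v), extVec_neg]; ring
      · have hzero : ∀ κ ∈ demandedSet bw.1 q', extVec v κ = 0 := by
          intro κ hκ
          rw [hv κ, if_neg (fun h => hκ0D' (by rw [← h]; exact hκ))]
        have hn1 : negvsup bw.1 q' v = 0 := by
          obtain ⟨κ1, hκ1⟩ := demandedSet_nonempty bw.1 q'
          apply le_antisymm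
          · apply Finset.sup'_le; intro κ hκ
            rw [hzero κ hκ, neg_zero]
          · have := Finset.le_sup' (fun κ => -extVec v κ) hκ1
            rwa [hzero κ1 hκ1, neg_zero] at this
        have hn2 : negvsup bw.1 q' (-v) = 0 := by
          obtain ⟨κ1, hκ1⟩ := demandedSet_nonempty bw.1 q'
          apply le_antisymm
          · apply Finset.sup'_le; intro κ hκ
            rw [extVec_neg, hzero κ hκ, neg_zero, neg_zero]
          · have := Finset.le_sup' (fun κ => -extVec (-v) κ) hκ1
            rwa [extVec_neg, hzero κ1 hκ1, neg_zero, neg_zero] at this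
        rw [hn1, hn2]; ring
  -- the sum of slopes equals the marginal weight
  have hslope : slopeIU B q' v + slopeIU B q' (-v) = marginalWeight B q i i' := by
    unfold slopeIU marginalWeight
    rw [← list_sum_map_add]
    congr 1
    apply List.map_congr_left
    intro bw hbw
    rw [← mul_add, hwid bw hbw]
    by_cases H : Demands bw.1 q i ∧ Demands bw.1 q i'
    · rw [if_pos H, if_pos H, mul_one]
    · rw [if_neg H, if_neg H, mul_zero]
  -- midpoint inequality from convexity
  obtain ⟨δ₂, hδ₂, hsa⟩ := f_step B q' v
  obtain ⟨δ₃, hδ₃, hsb⟩ := f_step B q' (-v)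
  set tt := min (min (δ₂/2) (δ₃/2)) (r/(2*(‖v‖+1))) with httdef
  have htt0 : 0 < tt := by
    apply lt_min (lt_min (by linarith) (by linarith))
    positivity
  have htta : tt < δ₂ := lt_of_le_of_lt (le_trans (min_le_left _ _) (min_le_left _ _)) (by linarith)
  have httb : tt < δ₃ := lt_of_le_of_lt (le_trans (min_le_left _ _) (min_le_right _ _)) (by linarith)
  have httv : tt * ‖v‖ < r/2 := by
    have h1 : tt ≤ r/(2*(‖v‖+1)) := min_le_right _ _
    have h3 : (0:ℝ) < ‖v‖ + 1 := by positivity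
    have h2 : tt*(‖v‖+1) ≤ r/(2*(‖v‖+1))*(‖v‖+1) := mul_le_mul_of_nonneg_right h1 h3.le
    have h4 : r/(2*(‖v‖+1))*(‖v‖+1) = r/2 := by field_simp
    nlinarith [norm_nonneg v, htt0]
  have hp1 : q' + tt • v ∈ P := by
    apply hball
    rw [Metric.mem_ball, dist_eq_norm]
    calc ‖q' + tt • v - q‖ = ‖(q' - q) + tt • v‖ := by congr 1; abel
      _ ≤ ‖q' - q‖ + ‖tt • v‖ := norm_add_le _ _
      _ = ‖q' - q‖ + tt * ‖v‖ := by
          rw [norm_smul, Real.norm_eq_abs, abs_of_pos htt0]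
      _ < r := by linarith
  have hp2 : q' + tt • (-v) ∈ P := by
    apply hball
    rw [Metric.mem_ball, dist_eq_norm]
    calc ‖q' + tt • (-v) - q‖ = ‖(q' - q) + tt • (-v)‖ := by congr 1; abel
      _ ≤ ‖q' - q‖ + ‖tt • (-v)‖ := norm_add_le _ _
      _ = ‖q' - q‖ + tt * ‖v‖ := by
          rw [norm_smul, Real.norm_eq_abs, abs_of_pos htt0, norm_neg]
      _ < r := by linarith
  have hmidpt : (1/2:ℝ) • (q' + tt • v) + (1/2:ℝ) • (q' + tt • (-v)) = q' := by module
  have hcx := hconv.2 hp1 hp2 (by norm_num : (0:ℝ) ≤ 1/2) (by norm_num : (0:ℝ) ≤ 1/2)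
    (by norm_num)
  rw [hmidpt] at hcx
  rw [hsa tt htt0.le htta, hsb tt htt0.le httb] at hcx
  simp only [smul_eq_mul] at hcx
  have : 0 ≤ tt * (slopeIU B q' v + slopeIU B q' (-v)) := by linarith
  rw [hslope] at this
  nlinarith [htt0]

/-- For a finite list of (±1-weighted) bids on `n ≥ 1` goods and a nonempty
open convex set `P ⊆ ℝ^n`, the restriction of the indirect utility function `f_B` to `P` is
convex iff at every price `q ∈ P` and every pair of distinct goods `i ≠ i'` in `{0,…,n}`,
the weights of the bids marginal on both `i` and `i'` at `q` sum to a non-negative number. -/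
theorem stmt1 (n : ℕ) (hn : 1 ≤ n) (B : List ((Fin n → ℝ) × ℝ))
    (hw : ∀ bw ∈ B, bw.2 = 1 ∨ bw.2 = -1)
    (P : Set (Fin n → ℝ)) (hPne : P.Nonempty) (hPopen : IsOpen P) (hPconv : Convex ℝ P) :
    ConvexOn ℝ P (indirectUtility B) ↔
      ∀ q ∈ P, ∀ (i i' : Fin (n + 1)), i ≠ i' → 0 ≤ marginalWeight B q i i' := by
  constructor
  · intro hconv q hq i i' hii
    exact marginal_of_convex B P hPopen hconv hq hii
  · intro hmw
    exact convex_of_marginal B P hPopen hPconv hmw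

end
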